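/- Let G be a group with a Hausdorff group topology τ of weight κ (κ infinite). Then G admits a Hausdorff linear group topology of weight at most κ^ω; equivalently, w_l(G) ≤ w_g(G)^ω, where w_g(G) is the minimal weight of a Hausdorff group topology on G and w_l(G) is the minimal weight of a Hausdorff linear group topology on G. -/

import Mathlib

open Cardinal TopologicalSpace

universe u

/-- The weight of a topology: the smallest cardinality of a (topological) base. -/
noncomputable def topWeight {X : Type u} (t : TopologicalSpace X) : Cardinal.{u} :=
  sInf {c | ∃ B : Set (Set X), @TopologicalSpace.IsTopologicalBasis X t B ∧ #B = c}

/-- A topology on a group is a linear group topology if it is a group topology having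
a neighbourhood base at the identity consisting of open subgroups. -/
def IsLinearGroupTopology {G : Type u} [Group G] (t : TopologicalSpace G) : Prop :=
  @IsTopologicalGroup G t _ ∧
    ∀ U ∈ @nhds G t 1, ∃ H : Subgroup G, @IsOpen G t (H : Set G) ∧ (H : Set G) ⊆ U

/-- The minimal weight of a Hausdorff linear group topology on `G`. -/
noncomputable def wl (G : Type u) [Group G] : Cardinal.{u} :=
  sInf {c | ∃ t : TopologicalSpace G, IsLinearGroupTopology t ∧ @T2Space G t ∧ topWeight t = c}

/-- The minimal weight of a Hausdorff group topology on `G`. -/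
noncomputable def wg (G : Type u) [Group G] : Cardinal.{u} :=
  sInf {c | ∃ t : TopologicalSpace G, @IsTopologicalGroup G t _ ∧ @T2Space G t ∧ topWeight t = c}

open Set Filter Pointwise Topology

namespace WlWgAux

/-- Helper: membership of nhds for an explicit topology. -/
lemma mem_nhds_aux {X : Type u} (t : TopologicalSpace X) {s : Set X} {x : X}
    (h : @IsOpen X t s) (hx : x ∈ s) : s ∈ @nhds X t x := by
  letI := t
  exact h.mem_nhds hx

/-- Helper: openness via neighbourhoods for an explicit topology. -/
lemma isOpen_of_forall_mem_nhds {X : Type u} (t : TopologicalSpace X) {s : Set X}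
    (h : ∀ x ∈ s, s ∈ @nhds X t x) : @IsOpen X t s := by
  letI := t
  exact isOpen_iff_mem_nhds.2 h

set_option linter.unusedSectionVars false

variable {G : Type u} [Group G] [TopologicalSpace G] [IsTopologicalGroup G]

/-- A chain of symmetric open neighbourhoods of `1` with `U (n+1) * U (n+1) ⊆ U n`. -/
def GChain (U : ℕ → Set G) : Prop :=
  ∀ n, IsOpen (U n) ∧ (1 : G) ∈ U n ∧ (U n)⁻¹ = U n ∧ U (n + 1) * U (n + 1) ⊆ U n

lemma GChain.succ_subset {U : ℕ → Set G} (hU : GChain U) (n : ℕ) : U (n + 1) ⊆ U n := by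
  intro a ha
  have : (1 : G) * a ∈ U n := (hU n).2.2.2 (Set.mul_mem_mul (hU (n + 1)).2.1 ha)
  simpa using this

/-- The subgroup `⋂ n, U n` associated to a chain. -/
def chainSubgroup {U : ℕ → Set G} (hU : GChain U) : Subgroup G where
  carrier := ⋂ n, U n
  one_mem' := mem_iInter.2 fun n => (hU n).2.1
  inv_mem' := by
    intro x hx
    rw [mem_iInter] at *
    intro n
    rw [← (hU n).2.2.1]
    simpa using hx n
  mul_mem' := by
    intro x y hx hy
    rw [mem_iInter] at *
    intro n
    exact (hU n).2.2.2 (Set.mul_mem_mul (hx (n + 1)) (hy (n + 1)))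

lemma chainSubgroup_subset {U : ℕ → Set G} (hU : GChain U) (n : ℕ) :
    (chainSubgroup hU : Set G) ⊆ U n :=
  iInter_subset U n

lemma mem_chainSubgroup {U : ℕ → Set G} {hU : GChain U} {x : G} :
    x ∈ chainSubgroup hU ↔ ∀ n, x ∈ U n := mem_iInter

lemma chain_step {W : Set G} (hW : W ∈ 𝓝 (1 : G)) :
    ∃ V : Set G, IsOpen V ∧ (1 : G) ∈ V ∧ V⁻¹ = V ∧ V * V ⊆ W := by
  obtain ⟨V, hVo, hV1, hVW⟩ := exists_open_nhds_one_mul_subset hW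
  refine ⟨V ∩ V⁻¹, hVo.inter hVo.inv, ⟨hV1, by simpa using hV1⟩, ?_, ?_⟩
  · ext x
    simp only [Set.mem_inv, Set.mem_inter_iff, inv_inv]
    tauto
  · exact (Set.mul_subset_mul inter_subset_left inter_subset_left).trans hVW

noncomputable def nextSet (W : Set G) : Set G :=
  letI := Classical.dec (W ∈ 𝓝 (1 : G))
  if h : W ∈ 𝓝 (1 : G) then (chain_step h).choose else Set.univ

lemma nextSet_spec {W : Set G} (h : W ∈ 𝓝 (1 : G)) :
    IsOpen (nextSet W) ∧ (1 : G) ∈ nextSet W ∧ (nextSet W)⁻¹ = nextSet W ∧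
      nextSet W * nextSet W ⊆ W := by
  simp only [nextSet]
  rw [dif_pos h]
  exact (chain_step h).choose_spec

lemma nextSet_mem_nhds {W : Set G} (h : W ∈ 𝓝 (1 : G)) : nextSet W ∈ 𝓝 (1 : G) :=
  (nextSet_spec h).1.mem_nhds (nextSet_spec h).2.1

lemma exists_chain_subset {W : Set G} (hW : W ∈ 𝓝 (1 : G)) :
    ∃ U : ℕ → Set G, GChain U ∧ U 0 ⊆ W := by
  have hmem : ∀ n, nextSet^[n] W ∈ 𝓝 (1 : G) := by
    intro n
    induction n with
    | zero => simpa using hW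
    | succ n ih => rw [Function.iterate_succ_apply']; exact nextSet_mem_nhds ih
  have hsucc : ∀ n, nextSet^[n + 1] W = nextSet (nextSet^[n] W) := fun n =>
    Function.iterate_succ_apply' _ _ _
  have key : ∀ n, IsOpen (nextSet^[n + 1] W) ∧ (1 : G) ∈ nextSet^[n + 1] W ∧
      (nextSet^[n + 1] W)⁻¹ = nextSet^[n + 1] W ∧
      nextSet^[n + 1] W * nextSet^[n + 1] W ⊆ nextSet^[n] W := by
    intro n
    rw [hsucc n]
    exact nextSet_spec (hmem n)
  refine ⟨fun n => nextSet^[n + 1] W,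
    fun n => ⟨(key n).1, (key n).2.1, (key n).2.2.1, (key (n + 1)).2.2.2⟩, ?_⟩
  intro x hx
  have hx' : x ∈ nextSet W := by
    simpa [Function.iterate_one] using hx
  have h1 := (nextSet_spec hW).2.2.2 (Set.mul_mem_mul (nextSet_spec hW).2.1 hx')
  simpa using h1

/-- The family of subsets of `G` which are chain subgroups. -/
def chainFam (G : Type u) [Group G] [TopologicalSpace G] [IsTopologicalGroup G] :
    Set (Set G) :=
  {s | ∃ (U : ℕ → Set G) (hU : GChain U), s = (chainSubgroup hU : Set G)}

lemma chainFam_inter {s t : Set G} (hs : s ∈ chainFam G) (ht : t ∈ chainFam G) :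
    ∃ z ∈ chainFam G, z ⊆ s ∩ t := by
  obtain ⟨U, hU, rfl⟩ := hs
  obtain ⟨V, hV, rfl⟩ := ht
  have hUV : GChain (fun n => U n ∩ V n) := by
    intro n
    refine ⟨(hU n).1.inter (hV n).1, ⟨(hU n).2.1, (hV n).2.1⟩, ?_, ?_⟩
    · rw [Set.inter_inv, (hU n).2.2.1, (hV n).2.2.1]
    · rw [Set.mul_subset_iff]
      intro a ha b hb
      exact ⟨(hU n).2.2.2 (Set.mul_mem_mul ha.1 hb.1), (hV n).2.2.2 (Set.mul_mem_mul ha.2 hb.2)⟩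
  refine ⟨_, ⟨_, hUV, rfl⟩, ?_⟩
  intro x hx
  rw [SetLike.mem_coe, mem_chainSubgroup] at hx
  exact ⟨mem_iInter.2 fun n => (hx n).1, mem_iInter.2 fun n => (hx n).2⟩

lemma chainFam_conj (x₀ : G) {s : Set G} (hs : s ∈ chainFam G) :
    ∃ z ∈ chainFam G, z ⊆ (fun x => x₀ * x * x₀⁻¹) ⁻¹' s := by
  obtain ⟨U, hU, rfl⟩ := hs
  have hc : Continuous fun x : G => x₀ * x * x₀⁻¹ :=
    (continuous_const.mul continuous_id).mul continuous_const
  have hCV : GChain (fun n => (fun x : G => x₀ * x * x₀⁻¹) ⁻¹' U n) := by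
    intro n
    refine ⟨(hU n).1.preimage hc, by simpa using (hU n).2.1, ?_, ?_⟩
    · ext x
      have key : ∀ y : G, y ∈ U n ↔ y⁻¹ ∈ U n := fun y => by
        conv_lhs => rw [← (hU n).2.2.1]
        exact Set.mem_inv
      show x₀ * x⁻¹ * x₀⁻¹ ∈ U n ↔ x₀ * x * x₀⁻¹ ∈ U n
      rw [key]
      have h2 : (x₀ * x⁻¹ * x₀⁻¹)⁻¹ = x₀ * x * x₀⁻¹ := by group
      rw [h2]
    · rw [Set.mul_subset_iff]
      intro a ha b hb
      simp only [Set.mem_preimage] at *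
      have : x₀ * (a * b) * x₀⁻¹ = (x₀ * a * x₀⁻¹) * (x₀ * b * x₀⁻¹) := by group
      rw [this]
      exact (hU n).2.2.2 (Set.mul_mem_mul ha hb)
  refine ⟨_, ⟨_, hCV, rfl⟩, ?_⟩
  intro x hx
  rw [SetLike.mem_coe, mem_chainSubgroup] at hx
  simp only [Set.mem_preimage, SetLike.mem_coe, mem_chainSubgroup]
  exact hx

lemma chainFam_nonempty : (chainFam G).Nonempty := by
  obtain ⟨U, hU, -⟩ := exists_chain_subset (univ_mem : (univ : Set G) ∈ 𝓝 (1 : G))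
  exact ⟨_, U, hU, rfl⟩

/-- The group filter basis made of all chain subgroups. -/
noncomputable def linFB (G : Type u) [Group G] [TopologicalSpace G] [IsTopologicalGroup G] :
    GroupFilterBasis G where
  sets := chainFam G
  nonempty := chainFam_nonempty
  inter_sets := fun hs ht => chainFam_inter hs ht
  one' := by
    rintro U ⟨V, hV, rfl⟩
    exact (chainSubgroup hV).one_mem
  mul' := by
    rintro U ⟨V, hV, rfl⟩
    refine ⟨_, ⟨V, hV, rfl⟩, ?_⟩
    rw [Set.mul_subset_iff]
    intro a ha b hb
    exact (chainSubgroup hV).mul_mem ha hb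
  inv' := by
    rintro U ⟨V, hV, rfl⟩
    refine ⟨_, ⟨V, hV, rfl⟩, ?_⟩
    intro a ha
    exact (chainSubgroup hV).inv_mem ha
  conj' := fun x₀ {U} hU => chainFam_conj x₀ hU

/-- The linear topology associated to the chain subgroups. -/
noncomputable def linTop (G : Type u) [Group G] [TopologicalSpace G] [IsTopologicalGroup G] :
    TopologicalSpace G :=
  (linFB G).topology

lemma isOpen_coset {s : Set G} (hs : s ∈ chainFam G) (x : G) :
    @IsOpen G (linTop G) ((fun y => x * y) '' s) := by
  obtain ⟨U, hU, rfl⟩ := hs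
  refine isOpen_of_forall_mem_nhds (linTop G) ?_
  rintro a ⟨h, hh, rfl⟩
  refine ((linFB G).nhds_hasBasis (x * h)).mem_iff.2 ?_
  refine ⟨_, ⟨U, hU, rfl⟩, ?_⟩
  rintro _ ⟨z, hz, rfl⟩
  exact ⟨h * z, (chainSubgroup hU).mul_mem hh hz, by dsimp only; rw [mul_assoc]⟩

lemma isOpen_chain {s : Set G} (hs : s ∈ chainFam G) : @IsOpen G (linTop G) s := by
  have h := isOpen_coset hs 1
  simpa using h

lemma linTop_isLinear : @IsTopologicalGroup G (linTop G) _ ∧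
    ∀ U ∈ @nhds G (linTop G) 1, ∃ H : Subgroup G,
      @IsOpen G (linTop G) (H : Set G) ∧ (H : Set G) ⊆ U := by
  refine ⟨(linFB G).isTopologicalGroup, ?_⟩
  intro U hU
  obtain ⟨s, hs, hsub⟩ := ((linFB G).nhds_one_hasBasis.mem_iff).1 hU
  have hs' : s ∈ chainFam G := hs
  obtain ⟨V, hV, rfl⟩ := hs'
  exact ⟨chainSubgroup hV, isOpen_chain ⟨V, hV, rfl⟩, hsub⟩

lemma linTop_t2 [T2Space G] : @T2Space G (linTop G) := by
  refine @T2Space.mk G (linTop G) (fun x y hxy => ?_)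
  have hne : x⁻¹ * y ≠ 1 := by
    rw [Ne, inv_mul_eq_one]
    exact hxy
  have hW : ({x⁻¹ * y}ᶜ : Set G) ∈ 𝓝 (1 : G) :=
    (isOpen_compl_singleton).mem_nhds (show (1 : G) ∈ ({x⁻¹ * y}ᶜ : Set G) by
      simpa using Ne.symm hne)
  obtain ⟨U, hU, hU0⟩ := exists_chain_subset hW
  set H := chainSubgroup hU with hH
  refine ⟨(fun z => x * z) '' H, (fun z => y * z) '' H, isOpen_coset ⟨U, hU, rfl⟩ x,
    isOpen_coset ⟨U, hU, rfl⟩ y, ⟨1, H.one_mem, mul_one x⟩, ⟨1, H.one_mem, mul_one y⟩, ?_⟩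
  rw [Set.disjoint_left]
  rintro _ ⟨a, ha, rfl⟩ ⟨b, hb, hab⟩
  have hmem : x⁻¹ * y ∈ H := by
    have hxy' : x⁻¹ * y = a * b⁻¹ := by
      have : y * b = x * a := hab
      rw [eq_comm, ← eq_mul_inv_iff_mul_eq] at this
      rw [this]
      group
    rw [hxy']
    exact H.mul_mem ha (H.inv_mem hb)
  have : x⁻¹ * y ∈ ({x⁻¹ * y}ᶜ : Set G) := hU0 (chainSubgroup_subset hU 0 hmem)
  exact this rfl

section Refine

lemma baseEx {Bas : Set (Set G)} (hBas : IsTopologicalBasis Bas) {W : Set G}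
    (hW : W ∈ 𝓝 (1 : G)) : ∃ s, s ∈ Bas ∧ (1 : G) ∈ s ∧ s ⊆ W := by
  rw [hBas.mem_nhds_iff] at hW
  obtain ⟨v, hv, h1, hsub⟩ := hW
  exact ⟨v, hv, h1, hsub⟩

lemma stepEx {Bas : Set (Set G)} (hBas : IsTopologicalBasis Bas) {s : Set G}
    (hs : s ∈ Bas) (h1 : (1 : G) ∈ s) {T : Set G} (hT : T ∈ 𝓝 (1 : G)) :
    ∃ s', (s' ∈ Bas ∧ (1 : G) ∈ s') ∧ (s' ∩ s'⁻¹ ⊆ T ∧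
      (s' ∩ s'⁻¹) * (s' ∩ s'⁻¹) ⊆ s ∩ s⁻¹) := by
  have hso : IsOpen (s ∩ s⁻¹) := (hBas.isOpen hs).inter (hBas.isOpen hs).inv
  have h1s : (1 : G) ∈ s ∩ s⁻¹ := ⟨h1, by simpa using h1⟩
  have hmem : (s ∩ s⁻¹) ∩ T ∈ 𝓝 (1 : G) := inter_mem (hso.mem_nhds h1s) hT
  obtain ⟨V, hVo, hV1, -, hVsq⟩ := chain_step hmem
  obtain ⟨s', hs'B, h1', hsub'⟩ := baseEx hBas (hVo.mem_nhds hV1)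
  refine ⟨s', ⟨hs'B, h1'⟩, ?_, ?_⟩
  · intro a ha
    have h2 := hVsq (Set.mul_mem_mul hV1 (hsub' ha.1))
    rw [one_mul] at h2
    exact h2.2
  · refine (Set.mul_subset_mul (inter_subset_left.trans hsub')
      (inter_subset_left.trans hsub')).trans (hVsq.trans inter_subset_left)

/-- A recursively chosen sequence of basic sets refining a chain. -/
noncomputable def refSeq (Bas : Set (Set G)) (hBas : IsTopologicalBasis Bas)
    (U : ℕ → Set G) (hU : GChain U) : ℕ → {s : Set G // s ∈ Bas ∧ (1 : G) ∈ s}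
  | 0 =>
    let h := baseEx hBas ((hU 0).1.mem_nhds (hU 0).2.1)
    ⟨h.choose, h.choose_spec.1, h.choose_spec.2.1⟩
  | n + 1 =>
    let p := refSeq Bas hBas U hU n
    let h := stepEx hBas p.2.1 p.2.2 ((hU (n + 1)).1.mem_nhds (hU (n + 1)).2.1)
    ⟨h.choose, h.choose_spec.1⟩

lemma refSeq_zero_subset (Bas : Set (Set G)) (hBas : IsTopologicalBasis Bas)
    (U : ℕ → Set G) (hU : GChain U) :
    ((refSeq Bas hBas U hU 0 : Set G)) ⊆ U 0 := by
  show ((let h := baseEx hBas ((hU 0).1.mem_nhds (hU 0).2.1)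
    (⟨h.choose, h.choose_spec.1, h.choose_spec.2.1⟩ :
      {s : Set G // s ∈ Bas ∧ (1 : G) ∈ s})) : Set G) ⊆ U 0
  exact (baseEx hBas ((hU 0).1.mem_nhds (hU 0).2.1)).choose_spec.2.2

lemma refSeq_succ_spec (Bas : Set (Set G)) (hBas : IsTopologicalBasis Bas)
    (U : ℕ → Set G) (hU : GChain U) (n : ℕ) :
    ((refSeq Bas hBas U hU (n + 1) : Set G) ∩ (refSeq Bas hBas U hU (n + 1) : Set G)⁻¹
        ⊆ U (n + 1)) ∧
      ((refSeq Bas hBas U hU (n + 1) : Set G) ∩ (refSeq Bas hBas U hU (n + 1) : Set G)⁻¹) *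
        ((refSeq Bas hBas U hU (n + 1) : Set G) ∩ (refSeq Bas hBas U hU (n + 1) : Set G)⁻¹) ⊆
        (refSeq Bas hBas U hU n : Set G) ∩ (refSeq Bas hBas U hU n : Set G)⁻¹ := by
  have heq : refSeq Bas hBas U hU (n + 1) =
      (let p := refSeq Bas hBas U hU n
       let h := stepEx hBas p.2.1 p.2.2 ((hU (n + 1)).1.mem_nhds (hU (n + 1)).2.1)
       ⟨h.choose, h.choose_spec.1⟩) := by
    rw [refSeq]
  rw [heq]
  exact (stepEx hBas (refSeq Bas hBas U hU n).2.1 (refSeq Bas hBas U hU n).2.2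
    ((hU (n + 1)).1.mem_nhds ((hU (n + 1)).2.1))).choose_spec.2

lemma exists_bchain {Bas : Set (Set G)} (hBas : IsTopologicalBasis Bas)
    {U : ℕ → Set G} (hU : GChain U) :
    ∃ b : ℕ → Set G, (∀ n, b n ∈ Bas) ∧ GChain (fun n => b n ∩ (b n)⁻¹) ∧
      ∀ n, b n ∩ (b n)⁻¹ ⊆ U n := by
  refine ⟨fun n => (refSeq Bas hBas U hU n : Set G), fun n => (refSeq Bas hBas U hU n).2.1,
    fun n => ?_, fun n => ?_⟩
  · set sn := (refSeq Bas hBas U hU n : Set G) with hsn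
    have hB := (refSeq Bas hBas U hU n).2.1
    have h1 := (refSeq Bas hBas U hU n).2.2
    refine ⟨(hBas.isOpen hB).inter (hBas.isOpen hB).inv, ⟨h1, by simpa using h1⟩, ?_, ?_⟩
    · rw [Set.inter_inv, inv_inv, Set.inter_comm]
    · exact (refSeq_succ_spec Bas hBas U hU n).2
  · cases n with
    | zero => exact inter_subset_left.trans (refSeq_zero_subset Bas hBas U hU)
    | succ n => exact (refSeq_succ_spec Bas hBas U hU n).1

end Refine

section Count

lemma quot_card_le {Bas : Set (Set G)} (hBas : IsTopologicalBasis Bas)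
    {U : ℕ → Set G} (hU : GChain U) :
    #(G ⧸ chainSubgroup hU) ≤ #(ℕ → ↥Bas) := by
  have hex : ∀ (x : G) (n : ℕ), ∃ v : Set G, v ∈ Bas ∧ x ∈ v ∧
      v ⊆ (fun y => x * y) '' U (n + 1) := by
    intro x n
    have hopen : IsOpen ((fun y => x * y) '' U (n + 1)) :=
      isOpenMap_mul_left x _ (hU (n + 1)).1
    have hx : x ∈ (fun y => x * y) '' U (n + 1) := ⟨1, (hU (n + 1)).2.1, mul_one x⟩
    exact hBas.exists_subset_of_mem_open hx hopen
  classical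
  let f : G → ℕ → ↥Bas := fun x n => ⟨(hex x n).choose, (hex x n).choose_spec.1⟩
  have hf : ∀ x n, x ∈ ((f x n : Set G)) ∧ ((f x n : Set G)) ⊆ (fun y => x * y) '' U (n + 1) :=
    fun x n => (hex x n).choose_spec.2
  have hkey : ∀ x y : G, f x = f y → x⁻¹ * y ∈ chainSubgroup hU := by
    intro x y hfe
    rw [mem_chainSubgroup]
    intro n
    have hy : y ∈ ((f x n : Set G)) := by rw [hfe]; exact (hf y n).1
    obtain ⟨z, hz, hzz⟩ := (hf x n).2 hy
    have hxz : x⁻¹ * y = z := by rw [← hzz]; group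
    rw [hxz]
    exact GChain.succ_subset hU n hz
  refine Cardinal.mk_le_of_injective (f := fun q : G ⧸ chainSubgroup hU => f q.out) ?_
  intro q q' he
  have h2 := hkey _ _ he
  rw [← QuotientGroup.out_eq' q, ← QuotientGroup.out_eq' q']
  exact QuotientGroup.eq.mpr h2

/-- Chains built from a fixed family of basic sets. -/
def BChainP (Bas : Set (Set G)) (b : ℕ → Set G) : Prop :=
  (∀ n, b n ∈ Bas) ∧ GChain (fun n => b n ∩ (b n)⁻¹)

/-- The collection of left cosets of basic chain subgroups. -/
def cosetBase (Bas : Set (Set G)) : Set (Set G) :=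
  {s | ∃ (b : ℕ → Set G) (hb : BChainP Bas b) (x : G),
    s = (fun y => x * y) '' (chainSubgroup hb.2 : Set G)}

lemma coset_img_subset {H : Subgroup G} {x y : G} (h : x⁻¹ * y ∈ H) :
    (fun z => y * z) '' (H : Set G) ⊆ (fun z => x * z) '' (H : Set G) := by
  rintro _ ⟨w, hw, rfl⟩
  refine ⟨(x⁻¹ * y) * w, H.mul_mem h hw, ?_⟩
  dsimp only
  group

lemma coset_img_eq {H : Subgroup G} {x y : G} (h : x⁻¹ * y ∈ H) :
    (fun z => x * z) '' (H : Set G) = (fun z => y * z) '' (H : Set G) := by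
  refine Subset.antisymm ?_ (coset_img_subset h)
  have h' : y⁻¹ * x ∈ H := by
    have := H.inv_mem h
    simpa [mul_inv_rev] using this
  exact coset_img_subset h'

lemma cosetBase_isBasis {Bas : Set (Set G)} (hBas : IsTopologicalBasis Bas) :
    @IsTopologicalBasis G (linTop G) (cosetBase Bas) := by
  refine @isTopologicalBasis_of_isOpen_of_nhds G (linTop G) _ ?_ ?_
  · rintro u ⟨b, hb, x, rfl⟩
    exact isOpen_coset ⟨_, hb.2, rfl⟩ x
  · intro a u hau hu
    have hnh : u ∈ @nhds G (linTop G) a := mem_nhds_aux (linTop G) hu hau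
    replace hnh := ((linFB G).nhds_hasBasis a).mem_iff.1 hnh
    obtain ⟨s, hsF, hsub⟩ := hnh
    have hs' : s ∈ chainFam G := hsF
    obtain ⟨U, hU, rfl⟩ := hs'
    obtain ⟨b, hbB, hbc, hbsub⟩ := exists_bchain hBas hU
    refine ⟨(fun y => a * y) '' (chainSubgroup hbc : Set G), ⟨b, ⟨hbB, hbc⟩, a, rfl⟩,
      ⟨1, (chainSubgroup hbc).one_mem, mul_one a⟩, ?_⟩
    refine subset_trans (Set.image_mono ?_) hsub
    intro z hz
    rw [SetLike.mem_coe, mem_chainSubgroup] at hz ⊢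
    exact fun n => hbsub n (hz n)

lemma cosetBase_card_le {Bas : Set (Set G)} (hBas : IsTopologicalBasis Bas) :
    #(cosetBase Bas) ≤ #(ℕ → ↥Bas) * #(ℕ → ↥Bas) := by
  classical
  let Ch := {b : ℕ → Set G // BChainP Bas b}
  have hsurj : ∃ φ : (Σ c : Ch, G ⧸ chainSubgroup c.2.2) → ↥(cosetBase Bas),
      Function.Surjective φ := by
    refine ⟨fun p => ⟨(fun y => p.2.out * y) '' (chainSubgroup p.1.2.2 : Set G),
      ⟨p.1.1, p.1.2, p.2.out, rfl⟩⟩, ?_⟩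
    rintro ⟨s, b, hb, x, rfl⟩
    refine ⟨⟨⟨b, hb⟩, QuotientGroup.mk x⟩, ?_⟩
    apply Subtype.ext
    show (fun y => (QuotientGroup.mk (s := chainSubgroup hb.2) x).out * y) ''
      (chainSubgroup hb.2 : Set G) = _
    have hrel : x⁻¹ * (QuotientGroup.mk (s := chainSubgroup hb.2) x).out ∈ chainSubgroup hb.2 :=
      QuotientGroup.eq.mp (QuotientGroup.out_eq' (QuotientGroup.mk (s := chainSubgroup hb.2) x)).symm
    exact (coset_img_eq hrel).symm
  obtain ⟨φ, hφ⟩ := hsurj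
  have h1 : #(cosetBase Bas) ≤ #(Σ c : Ch, G ⧸ chainSubgroup c.2.2) :=
    Cardinal.mk_le_of_surjective hφ
  have h2 : #(Σ c : Ch, G ⧸ chainSubgroup c.2.2) ≤ #Ch * #(ℕ → ↥Bas) := by
    rw [Cardinal.mk_sigma, ← Cardinal.sum_const']
    exact Cardinal.sum_le_sum _ _ fun c => quot_card_le hBas c.2.2
  have h3 : #Ch ≤ #(ℕ → ↥Bas) := by
    refine Cardinal.mk_le_of_injective
      (f := fun c : Ch => fun n => (⟨c.1 n, c.2.1 n⟩ : ↥Bas)) ?_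
    intro c c' he
    apply Subtype.ext
    funext n
    exact congrArg Subtype.val (congrFun he n)
  exact h1.trans (h2.trans (mul_le_mul_left h3 _))

end Count

/-- The main construction: a Hausdorff linear group topology of weight at most `κ ^ ℵ₀`. -/
theorem exists_linTop [T2Space G] {κ : Cardinal.{u}} (hκ : ℵ₀ ≤ κ)
    (hw : topWeight (inferInstance : TopologicalSpace G) ≤ κ) :
    ∃ t' : TopologicalSpace G, IsLinearGroupTopology t' ∧ @T2Space G t' ∧
      topWeight t' ≤ κ ^ ℵ₀ := by
  have hne : {c | ∃ B : Set (Set G), IsTopologicalBasis B ∧ #B = c}.Nonempty :=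
    ⟨_, {s : Set G | IsOpen s}, isTopologicalBasis_opens, rfl⟩
  have hmemW : ∃ B : Set (Set G), IsTopologicalBasis B ∧
      Cardinal.mk B = topWeight (inferInstance : TopologicalSpace G) := csInf_mem hne
  obtain ⟨Bas, hBas, hBcard⟩ := hmemW
  have hBk : #↥Bas ≤ κ := le_trans (le_of_eq hBcard) hw
  refine ⟨linTop G, linTop_isLinear, linTop_t2, ?_⟩
  have h1 : topWeight (linTop G) ≤ #(cosetBase Bas) :=
    csInf_le' ⟨cosetBase Bas, cosetBase_isBasis hBas, rfl⟩
  have h2 : #(ℕ → ↥Bas) ≤ κ ^ (ℵ₀ : Cardinal.{u}) := by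
    have : #(ℕ → ↥Bas) = #↥Bas ^ (ℵ₀ : Cardinal.{u}) := by
      rw [Cardinal.mk_arrow]; simp
    rw [this]
    exact Cardinal.power_le_power_right hBk
  have h3 : #(cosetBase Bas) ≤ κ ^ (ℵ₀ : Cardinal.{u}) := by
    refine le_trans (cosetBase_card_le hBas) ?_
    refine le_trans (mul_le_mul' h2 h2) ?_
    rw [← Cardinal.power_add, Cardinal.aleph0_add_aleph0]
  exact h1.trans h3

end WlWgAux

/-- Any infinite T1 space has infinite weight. -/
theorem aleph0_le_topWeight_aux {X : Type u} [TopologicalSpace X] [T1Space X] [Infinite X] :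
    ℵ₀ ≤ topWeight (inferInstance : TopologicalSpace X) := by
  by_contra hlt
  push_neg at hlt
  have hne : {c | ∃ B : Set (Set X), IsTopologicalBasis B ∧ #B = c}.Nonempty :=
    ⟨_, {s : Set X | IsOpen s}, isTopologicalBasis_opens, rfl⟩
  have hmemW : ∃ B : Set (Set X), IsTopologicalBasis B ∧
      Cardinal.mk B = topWeight (inferInstance : TopologicalSpace X) := csInf_mem hne
  obtain ⟨Bas, hBas, hBcard⟩ := hmemW
  have hfin : Finite ↥Bas := by
    rw [← Cardinal.mk_lt_aleph0_iff]
    rw [hBcard]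
    exact hlt
  have hinj : Function.Injective (fun x : X => {b : ↥Bas | x ∈ (b : Set X)}) := by
    intro x y hxy
    by_contra hne'
    have hopen : IsOpen ({y}ᶜ : Set X) := isOpen_compl_singleton
    have hx : x ∈ ({y}ᶜ : Set X) := by simpa using hne'
    obtain ⟨v, hv, hxv, hvsub⟩ := hBas.exists_subset_of_mem_open hx hopen
    have hyv : y ∈ v := by
      have : (⟨v, hv⟩ : ↥Bas) ∈ {b : ↥Bas | x ∈ (b : Set X)} := hxv
      have h2 : {b : ↥Bas | x ∈ (b : Set X)} = {b : ↥Bas | y ∈ (b : Set X)} := hxy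
      rw [h2] at this
      exact this
    exact (hvsub hyv) rfl
  have : Finite X := Finite.of_injective _ hinj
  exact not_finite X

/-- If an infinite group `G` carries a Hausdorff group topology of weight `κ` (`κ` infinite),
then `G` admits a Hausdorff linear group topology of weight at most `κ ^ ℵ₀`; equivalently,
`wl G ≤ (wg G) ^ ℵ₀`. -/
theorem wl_le_wg_pow_omega (G : Type u) [Group G] [Infinite G] (t : TopologicalSpace G)
    (htg : @IsTopologicalGroup G t _) (ht2 : @T2Space G t) (κ : Cardinal.{u})
    (hκ : ℵ₀ ≤ κ) (hw : topWeight t = κ) :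
    (∃ t' : TopologicalSpace G, IsLinearGroupTopology t' ∧ @T2Space G t' ∧
      topWeight t' ≤ κ ^ ℵ₀) ∧ wl G ≤ (wg G) ^ ℵ₀ := by
  constructor
  · letI := t
    haveI := htg
    haveI := ht2
    exact WlWgAux.exists_linTop hκ (le_of_eq hw)
  · have hne : {c | ∃ t0 : TopologicalSpace G, @IsTopologicalGroup G t0 _ ∧ @T2Space G t0 ∧
        topWeight t0 = c}.Nonempty := ⟨_, t, htg, ht2, rfl⟩
    have hmem : wg G ∈ {c | ∃ t0 : TopologicalSpace G, @IsTopologicalGroup G t0 _ ∧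
        @T2Space G t0 ∧ topWeight t0 = c} := csInf_mem hne
    obtain ⟨t₀, htg₀, ht₀2, hwt₀⟩ := hmem
    have hκ₀ : ℵ₀ ≤ wg G := by
      rw [← hwt₀]
      letI := t₀
      haveI := ht₀2
      exact aleph0_le_topWeight_aux
    have hlin : ∃ t' : TopologicalSpace G, IsLinearGroupTopology t' ∧ @T2Space G t' ∧
        topWeight t' ≤ (wg G) ^ ℵ₀ := by
      letI := t₀
      haveI := htg₀
      haveI := ht₀2
      exact WlWgAux.exists_linTop hκ₀ (le_of_eq hwt₀)
    obtain ⟨t', hlin', ht'2, hwt'⟩ := hlin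
    exact le_trans (csInf_le' ⟨t', hlin', ht'2, rfl⟩) hwt'
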